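/- For any system G of integer polynomials, the function R_G(m_1,…,m_r) := Σ_{1 ≤ k ≤ m, gcd(k,m)=1} c_{m_1}(g_1(k))···c_{m_r}(g_r(k)), where m = lcm(m_1,…,m_r), is multiplicative in (m_1,…,m_r). -/

import Mathlib

open Finset ArithmeticFunction

/-- The Ramanujan sum `c_n(k) = ∑_{d ∣ gcd(k,n)} d · μ(n/d)`, for integer `k`. -/
def ramanujanSum (n : ℕ) (k : ℤ) : ℤ :=
  ∑ d ∈ (Int.gcd k n).divisors, (d : ℤ) * moebius (n / d)

/-- `R_G(m₁,…,m_r) = ∑_{1 ≤ k ≤ lcm, gcd(k,lcm)=1} ∏ᵢ c_{mᵢ}(gᵢ(k))`. -/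
def RG {r : ℕ} (g : Fin r → Polynomial ℤ) (m : Fin r → ℕ) : ℤ :=
  ∑ k ∈ (Icc 1 (Finset.univ.lcm m)).filter
      (fun k => Nat.gcd k (Finset.univ.lcm m) = 1),
    ∏ i, ramanujanSum (m i) ((g i).eval (k : ℤ))

lemma ramanujanSum_eq {n : ℕ} (hn : n ≠ 0) (k : ℤ) :
    ramanujanSum n k
      = ∑ d ∈ n.divisors, (if (d : ℤ) ∣ k then (d : ℤ) else 0) * moebius (n / d) := by
  have hset : (Int.gcd k n).divisors = n.divisors.filter (fun d : ℕ => (d : ℤ) ∣ k) := by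
    ext d
    simp only [Nat.mem_divisors, Finset.mem_filter]
    constructor
    · rintro ⟨hd, hne⟩
      have h1 : d ∣ k.natAbs ∧ d ∣ n := by
        have := hd
        rw [Int.gcd] at this
        simpa [Nat.dvd_gcd_iff] using this
      exact ⟨⟨h1.2, hn⟩, Int.natCast_dvd.2 h1.1⟩
    · rintro ⟨⟨hdn, -⟩, hdk⟩
      refine ⟨?_, ?_⟩
      · rw [Int.gcd]
        exact Nat.dvd_gcd (Int.natCast_dvd.1 hdk) (by simpa using hdn)
      · intro h0
        rw [Int.gcd_eq_zero_iff] at h0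
        exact hn (by exact_mod_cast h0.2)
  rw [ramanujanSum, hset, Finset.sum_filter]
  refine Finset.sum_congr rfl fun d _ => ?_
  split <;> simp

/-- Periodicity: `c_n(k)` only depends on `k` mod `n`. -/
lemma ramanujanSum_congr {n : ℕ} (hn : n ≠ 0) {k k' : ℤ} (h : (n : ℤ) ∣ k - k') :
    ramanujanSum n k = ramanujanSum n k' := by
  rw [ramanujanSum_eq hn, ramanujanSum_eq hn]
  refine Finset.sum_congr rfl fun d hd => ?_
  have hdn : (d : ℤ) ∣ (n : ℤ) := Int.natCast_dvd_natCast.2 (Nat.mem_divisors.1 hd).1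
  have hsub : (d : ℤ) ∣ k - k' := hdn.trans h
  have : (d : ℤ) ∣ k ↔ (d : ℤ) ∣ k' := by
    constructor
    · intro hk; have := dvd_sub hk hsub; simpa using this
    · intro hk; have := dvd_add hsub hk; simpa using this
  rw [if_congr this rfl rfl]

/-- Multiplicativity of the Ramanujan sum in `n`. -/
lemma ramanujanSum_mul {a b : ℕ} (hab : Nat.Coprime a b) (ha : a ≠ 0) (hb : b ≠ 0)
    (k : ℤ) : ramanujanSum (a * b) k = ramanujanSum a k * ramanujanSum b k := by
  classical
  set F : ArithmeticFunction ℤ :=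
    ⟨fun d => if (d : ℤ) ∣ k then (d : ℤ) else 0, by simp⟩ with hF
  have hFapp : ∀ d : ℕ, F d = if (d : ℤ) ∣ k then (d : ℤ) else 0 := fun d => rfl
  have hFmult : F.IsMultiplicative := by
    constructor
    · simp [hFapp]
    · intro p q hpq
      rw [hFapp, hFapp, hFapp]
      have hiff : ((p * q : ℕ) : ℤ) ∣ k ↔ ((p : ℤ) ∣ k ∧ (q : ℤ) ∣ k) := by
        constructor
        · intro hd
          push_cast at hd
          exact ⟨(dvd_mul_right (p:ℤ) q).trans hd, (dvd_mul_left (q:ℤ) p).trans hd⟩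
        · rintro ⟨h1, h2⟩
          have hc : IsCoprime (p : ℤ) (q : ℤ) := by
            rw [Nat.isCoprime_iff_coprime]; exact hpq
          push_cast
          exact hc.mul_dvd h1 h2
      by_cases h1 : (p : ℤ) ∣ k <;> by_cases h2 : (q : ℤ) ∣ k
      · rw [if_pos (hiff.2 ⟨h1, h2⟩), if_pos h1, if_pos h2]; push_cast; ring
      · rw [if_neg (fun hd => h2 (hiff.1 hd).2), if_pos h1, if_neg h2, mul_zero]
      · rw [if_neg (fun hd => h1 (hiff.1 hd).1), if_neg h1, zero_mul]
      · rw [if_neg (fun hd => h1 (hiff.1 hd).1), if_neg h1, zero_mul]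
  have key : ∀ N : ℕ, N ≠ 0 → ramanujanSum N k = (F * (moebius : ArithmeticFunction ℤ)) N := by
    intro N hN
    rw [ramanujanSum_eq hN, ArithmeticFunction.mul_apply,
      ← Nat.sum_divisorsAntidiagonal (fun x y => (if (x : ℤ) ∣ k then (x : ℤ) else 0) * moebius y)]
    rfl
  rw [key _ (mul_ne_zero ha hb), key _ ha, key _ hb,
    (hFmult.mul isMultiplicative_moebius).map_mul_of_coprime hab]

/-- Representative in `[1, L]` of `x` mod `L`. -/
def rho (L x : ℕ) : ℕ := if x % L = 0 then L else x % L

lemma rho_mem {L : ℕ} (hL : L ≠ 0) (x : ℕ) : rho L x ∈ Icc 1 L := by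
  rw [rho]
  split
  · simp [Nat.one_le_iff_ne_zero, hL]
  · have := Nat.mod_lt x (Nat.pos_of_ne_zero hL)
    simp only [Finset.mem_Icc]
    omega

lemma rho_modEq (L x : ℕ) : rho L x ≡ x [MOD L] := by
  unfold rho Nat.ModEq
  by_cases h : x % L = 0
  · rw [if_pos h, Nat.mod_self, h]
  · rw [if_neg h, Nat.mod_mod_of_dvd x dvd_rfl]

lemma coprime_of_modEq {L a b : ℕ} (h : a ≡ b [MOD L]) (hb : Nat.Coprime b L) :
    Nat.Coprime a L := by
  have ha' : Nat.gcd a L = Nat.gcd (a % L) L := by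
    rw [Nat.gcd_comm, Nat.gcd_rec]
  have hb' : Nat.gcd b L = Nat.gcd (b % L) L := by
    rw [Nat.gcd_comm, Nat.gcd_rec]
  have := h
  unfold Nat.ModEq at this
  unfold Nat.Coprime at *
  rw [ha', this, ← hb']
  exact hb

lemma eq_of_modEq_Icc {L a b : ℕ} (ha : a ∈ Icc 1 L) (hb : b ∈ Icc 1 L)
    (h : a ≡ b [MOD L]) : a = b := by
  rw [Finset.mem_Icc] at ha hb
  rw [Nat.modEq_iff_dvd] at h
  rcases h with ⟨c, hc⟩
  have h1 : (b : ℤ) - a = L * c := hc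
  have hL : (1 : ℤ) ≤ L := by exact_mod_cast (le_trans ha.1 ha.2 : 1 ≤ L)
  have hb2 : (b : ℤ) ≤ L := by exact_mod_cast hb.2
  have ha2 : (a : ℤ) ≤ L := by exact_mod_cast ha.2
  have ha1 : (1 : ℤ) ≤ a := by exact_mod_cast ha.1
  have hb1 : (1 : ℤ) ≤ b := by exact_mod_cast hb.1
  have hc0 : c = 0 := by nlinarith
  rw [hc0, mul_zero] at h1
  omega

theorem RG_multiplicative {r : ℕ} (g : Fin r → Polynomial ℤ)
    (m n : Fin r → ℕ) (hm : ∀ i, 0 < m i) (hn : ∀ i, 0 < n i)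
    (h : Nat.Coprime (∏ i, m i) (∏ i, n i)) :
    RG g (fun i => m i * n i) = RG g m * RG g n := by
  classical
  set M := Finset.univ.lcm m with hM
  set N := Finset.univ.lcm n with hN
  have hMd : M ∣ ∏ i, m i := Finset.lcm_dvd fun i _ => Finset.dvd_prod_of_mem m (mem_univ i)
  have hNd : N ∣ ∏ i, n i := Finset.lcm_dvd fun i _ => Finset.dvd_prod_of_mem n (mem_univ i)
  have hM0 : M ≠ 0 := by
    intro h0
    have : (∏ i, m i) = 0 := by
      rcases hMd with ⟨c, hc⟩; rw [hc, h0, zero_mul]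
    exact absurd this (Finset.prod_ne_zero_iff.2 fun i _ => (hm i).ne').elim
  have hN0 : N ≠ 0 := by
    intro h0
    have : (∏ i, n i) = 0 := by
      rcases hNd with ⟨c, hc⟩; rw [hc, h0, zero_mul]
    exact absurd this (Finset.prod_ne_zero_iff.2 fun i _ => (hn i).ne').elim
  have hMN : Nat.Coprime M N :=
    Nat.Coprime.coprime_dvd_left hMd (Nat.Coprime.coprime_dvd_right hNd h)
  have hmini : ∀ i j, Nat.Coprime (m i) (n j) := fun i j =>
    Nat.Coprime.coprime_dvd_left (Finset.dvd_prod_of_mem m (mem_univ i))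
      (Nat.Coprime.coprime_dvd_right (Finset.dvd_prod_of_mem n (mem_univ j)) h)
  have hmM : ∀ i, m i ∣ M := fun i => Finset.dvd_lcm (mem_univ i)
  have hnN : ∀ i, n i ∣ N := fun i => Finset.dvd_lcm (mem_univ i)
  have hL : Finset.univ.lcm (fun i => m i * n i) = M * N := by
    apply Nat.dvd_antisymm
    · exact Finset.lcm_dvd fun i _ => mul_dvd_mul (hmM i) (hnN i)
    · refine hMN.mul_dvd_of_dvd_of_dvd ?_ ?_
      · exact Finset.lcm_dvd fun i _ =>
          (dvd_mul_right (m i) (n i)).trans (Finset.dvd_lcm (mem_univ i))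
      · exact Finset.lcm_dvd fun i _ =>
          (dvd_mul_left (n i) (m i)).trans (Finset.dvd_lcm (mem_univ i))
  rw [RG, RG, RG, hL]
  -- reindex via CRT
  rw [show ((Icc 1 M).filter (fun k => Nat.gcd k M = 1)).sum
        (fun k => ∏ i, ramanujanSum (m i) ((g i).eval (k : ℤ))) *
      ((Icc 1 N).filter (fun k => Nat.gcd k N = 1)).sum
        (fun k => ∏ i, ramanujanSum (n i) ((g i).eval (k : ℤ))) =
      ∑ p ∈ ((Icc 1 M).filter (fun k => Nat.gcd k M = 1)) ×ˢ
        ((Icc 1 N).filter (fun k => Nat.gcd k N = 1)),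
        (∏ i, ramanujanSum (m i) ((g i).eval (p.1 : ℤ))) *
        (∏ i, ramanujanSum (n i) ((g i).eval (p.2 : ℤ))) from by
    rw [Finset.sum_product]; exact Finset.sum_mul_sum _ _ _ _]
  refine Finset.sum_nbij' (i := fun k => (rho M k, rho N k))
    (j := fun p => rho (M * N) (Nat.chineseRemainder hMN p.1 p.2)) ?_ ?_ ?_ ?_ ?_
  · intro k hk
    rw [Finset.mem_filter, Finset.mem_Icc] at hk
    have hkcop : Nat.Coprime k (M * N) := hk.2
    rw [Nat.coprime_mul_iff_right] at hkcop
    rw [Finset.mem_product, Finset.mem_filter, Finset.mem_filter]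
    exact ⟨⟨rho_mem hM0 k, coprime_of_modEq ((rho_modEq M k)) hkcop.1⟩,
      ⟨rho_mem hN0 k, coprime_of_modEq ((rho_modEq N k)) hkcop.2⟩⟩
  · intro p hp
    rw [Finset.mem_product, Finset.mem_filter, Finset.mem_filter] at hp
    set c := (Nat.chineseRemainder hMN p.1 p.2 : ℕ) with hc
    have hcM : c ≡ p.1 [MOD M] := (Nat.chineseRemainder hMN p.1 p.2).2.1
    have hcN : c ≡ p.2 [MOD N] := (Nat.chineseRemainder hMN p.1 p.2).2.2
    have hcop : Nat.Coprime c (M * N) := by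
      rw [Nat.coprime_mul_iff_right]
      exact ⟨coprime_of_modEq hcM hp.1.2, coprime_of_modEq hcN hp.2.2⟩
    rw [Finset.mem_filter]
    exact ⟨rho_mem (mul_ne_zero hM0 hN0) c,
      coprime_of_modEq (rho_modEq (M * N) c) hcop⟩
  · intro k hk
    rw [Finset.mem_filter] at hk
    set c := (Nat.chineseRemainder hMN (rho M k) (rho N k) : ℕ) with hc
    have hcM : c ≡ k [MOD M] :=
      (Nat.chineseRemainder hMN (rho M k) (rho N k)).2.1.trans (rho_modEq M k)
    have hcN : c ≡ k [MOD N] :=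
      (Nat.chineseRemainder hMN (rho M k) (rho N k)).2.2.trans (rho_modEq N k)
    have hck : c ≡ k [MOD M * N] :=
      (Nat.modEq_and_modEq_iff_modEq_mul hMN).1 ⟨hcM, hcN⟩
    exact eq_of_modEq_Icc (rho_mem (mul_ne_zero hM0 hN0) c) hk.1
      ((rho_modEq (M * N) c).trans hck)
  · intro p hp
    rw [Finset.mem_product, Finset.mem_filter, Finset.mem_filter] at hp
    set c := (Nat.chineseRemainder hMN p.1 p.2 : ℕ) with hc
    have hcM : c ≡ p.1 [MOD M] := (Nat.chineseRemainder hMN p.1 p.2).2.1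
    have hcN : c ≡ p.2 [MOD N] := (Nat.chineseRemainder hMN p.1 p.2).2.2
    have h1 : rho M (rho (M * N) c) = p.1 := by
      refine eq_of_modEq_Icc (rho_mem hM0 _) hp.1.1 ?_
      refine (rho_modEq M _).trans ?_
      refine Nat.ModEq.trans ?_ hcM
      exact (Nat.ModEq.of_dvd (dvd_mul_right M N) (rho_modEq (M * N) c))
    have h2 : rho N (rho (M * N) c) = p.2 := by
      refine eq_of_modEq_Icc (rho_mem hN0 _) hp.2.1 ?_
      refine (rho_modEq N _).trans ?_
      refine Nat.ModEq.trans ?_ hcN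
      exact (Nat.ModEq.of_dvd (dvd_mul_left N M) (rho_modEq (M * N) c))
    exact Prod.ext h1 h2
  · intro k hk
    rw [Finset.mem_filter] at hk
    have hsplit : ∀ i : Fin r,
        ramanujanSum (m i * n i) ((g i).eval (k : ℤ)) =
          ramanujanSum (m i) ((g i).eval ((rho M k : ℕ) : ℤ)) *
          ramanujanSum (n i) ((g i).eval ((rho N k : ℕ) : ℤ)) := by
      intro i
      rw [ramanujanSum_mul (hmini i i) (hm i).ne' (hn i).ne']
      congr 1
      · refine ramanujanSum_congr (hm i).ne' ?_
        have hmod : (M : ℤ) ∣ (k : ℤ) - ((rho M k : ℕ) : ℤ) := by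
          have := rho_modEq M k
          rw [Nat.modEq_iff_dvd] at this
          simpa using this
        have hdvd : ((m i : ℤ)) ∣ (k : ℤ) - ((rho M k : ℕ) : ℤ) :=
          (Int.natCast_dvd_natCast.2 (hmM i)).trans hmod
        exact hdvd.trans (Polynomial.sub_dvd_eval_sub _ _ _)
      · refine ramanujanSum_congr (hn i).ne' ?_
        have hmod : (N : ℤ) ∣ (k : ℤ) - ((rho N k : ℕ) : ℤ) := by
          have := rho_modEq N k
          rw [Nat.modEq_iff_dvd] at this
          simpa using this
        have hdvd : ((n i : ℤ)) ∣ (k : ℤ) - ((rho N k : ℕ) : ℤ) :=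
          (Int.natCast_dvd_natCast.2 (hnN i)).trans hmod
        exact hdvd.trans (Polynomial.sub_dvd_eval_sub _ _ _)
    calc ∏ i, ramanujanSum (m i * n i) ((g i).eval (k : ℤ))
        = ∏ i, (ramanujanSum (m i) ((g i).eval ((rho M k : ℕ) : ℤ)) *
            ramanujanSum (n i) ((g i).eval ((rho N k : ℕ) : ℤ))) :=
          Finset.prod_congr rfl fun i _ => hsplit i
      _ = _ := Finset.prod_mul_distrib
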